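/- Let u ∈ V be a node of in-degree 0 in G (no edge of E ends at u), let G − u denote the subgraph of G induced on V ∖ {u}, and let T′ be a BFS-tree of G − u. Then the ordered spanning tree of G obtained from T′ by adding u as the rightmost child of r — that is, with parent r and placed last in the sibling order of the children of r — is a BFS-tree of G. -/

import Mathlib

namespace BFSFormal

variable {V : Type} [Fintype V] [DecidableEq V]

/-- An ordered rooted tree structure on `V ∪ {r}`, where the dummy root `r`
is represented by `none`.  `parent v = none` means the parent of `v` is `r`;
`children w` lists the children of `w` in sibling order. -/
structure PreTree (V : Type) where
  parent : V → Option V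
  children : Option V → List V

/-- One step of the parent function, with `r` (= `none`) absorbing. -/
def parentStep (T : PreTree V) : Option V → Option V
  | none => none
  | some v => T.parent v

/-- `T` is an ordered spanning tree of the directed graph on `V` with edge set `E`
(augmented with the dummy root `r`): iterating the parent function from any node
reaches `r`; every tree edge `(P v, v)` with `P v ≠ r` lies in `E`; and the
children lists give, without repetition, exactly the children of each node. -/
def IsOST (E : Finset (V × V)) (T : PreTree V) : Prop :=
  (∀ v : V, ∃ k : ℕ, (parentStep T)^[k] (some v) = none) ∧
  (∀ v u : V, T.parent v = some u → (u, v) ∈ E) ∧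
  (∀ w : Option V, (T.children w).Nodup) ∧
  (∀ (w : Option V) (v : V), v ∈ T.children w ↔ T.parent v = w)

/-- Replace each node of a list by its list of children (used to pass from one
level of a subtree to the next, keeping the sibling orders). -/
def expand (T : PreTree V) (L : List V) : List V :=
  L.flatMap fun v => T.children (some v)

/-- The breadth-first listing of the nodes of `T`: for each child `c` of the root `r`
in sibling order, all nodes of the subtree rooted at `c` are listed, in level
(breadth-first) order determined by the sibling orders, before the subtree of any
later child of `r`. -/
def bfoList (T : PreTree V) : List V :=
  (T.children none).flatMap fun c =>
    (List.range (Fintype.card V + 1)).flatMap fun k => (expand T)^[k] [c]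

/-- The breadth-first order of a node of `V` on `T` (the root `r` gets `0`,
the nodes of `V` get `1, …, n` in the order of `bfoList`). -/
def bfo (T : PreTree V) (v : V) : ℕ := (bfoList T).idxOf v + 1

/-- Breadth-first order extended to `V ∪ {r}`, with `bfo r = 0`. -/
def bfoOpt (T : PreTree V) : Option V → ℕ
  | none => 0
  | some v => bfo T v

/-- `(u, v)` is a V-BFS edge with respect to `T`:
`bfo u < bfo v`, `P v ≠ r`, and `bfo u < bfo (P v)`. -/
def IsVBFS (T : PreTree V) (e : V × V) : Prop :=
  bfo T e.1 < bfo T e.2 ∧ T.parent e.2 ≠ none ∧ bfo T e.1 < bfoOpt T (T.parent e.2)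

instance (T : PreTree V) (e : V × V) : Decidable (IsVBFS T e) := by
  unfold IsVBFS; infer_instance

/-- `T` is a BFS-tree of the graph with edge set `E` : it is an ordered spanning
tree of that graph and no edge of `E` is a V-BFS edge with respect to `T`. -/
def IsBFSTree (E : Finset (V × V)) (T : PreTree V) : Prop :=
  IsOST E T ∧ ∀ e ∈ E, ¬ IsVBFS T e

/-- `LLSP E` : the number of edges of a longest simple directed path of the graph
with edge set `E`. -/
noncomputable def LLSP (E : Finset (V × V)) : ℕ :=
  sSup {k : ℕ | ∃ p : List V, p.Nodup ∧ p.Chain' (fun a b => (a, b) ∈ E) ∧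
    p.length = k + 1}

/-- `EL` is an enumeration `e₁, …, e_m` of the edge set `E`. -/
def IsEnum (E : Finset (V × V)) (EL : List (V × V)) : Prop :=
  EL.Nodup ∧ ∀ e : V × V, e ∈ EL ↔ e ∈ E

/-- The initial ordered spanning tree of EE-BFS / EB-BFS: every node of `V` is a
child of `r`, in a fixed sibling order. -/
def IsInitTree (T : PreTree V) : Prop :=
  (∀ v : V, T.parent v = none) ∧ (T.children none).Nodup ∧
  (∀ v : V, v ∈ T.children none) ∧ (∀ v : V, T.children (some v) = [])

/-- Restructuring step of EE-BFS: make `v` the rightmost child of `u` (the parent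
of `v` becomes `u` and `v` is placed last in the sibling order of the children of
`u`), all other parents and sibling orders being unchanged. -/
def restructure (T : PreTree V) (u v : V) : PreTree V where
  parent w := if w = v then some u else T.parent w
  children w :=
    if w = some u then (T.children (some u)).erase v ++ [v]
    else (T.children w).erase v

/-- Scanning a list of edges, EE-BFS style: each scanned edge that is a V-BFS edge
with respect to the current tree triggers a restructuring. -/
def EEscan (EL : List (V × V)) (T : PreTree V) : PreTree V :=
  EL.foldl (fun Tc e => if IsVBFS Tc e then restructure Tc e.1 e.2 else Tc) T

/-- One pass of EE-BFS over the fixed enumeration `EL` of `E`. -/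
def EEstep (EL : List (V × V)) (T : PreTree V) : PreTree V := EEscan EL T

/- ------------------  IM-BFS  ------------------ -/

/-- State of the deterministic BFS of IM-BFS: the FIFO queue, the set of nodes
already enqueued (adopted), and the adoption records `(new parent, child)` in
adoption order. -/
structure BFSState (V : Type) where
  queue : List V
  marked : Finset V
  adopts : List (Option V × V)

/-- Enqueue, with prospective parent `p`, the candidates in order; a node already
enqueued before is ignored (it was adopted the first time it was enqueued). -/
def enq (p : Option V) (cands : List V) (s : BFSState V) : BFSState V :=
  cands.foldl
    (fun s c =>
      if c ∈ s.marked then s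
      else ⟨s.queue ++ [c], insert c s.marked, s.adopts ++ [(p, c)]⟩) s

/-- The main loop of IM-BFS (fuel-based).  When the queue is nonempty, the first
node `u` is dequeued and visited: the children of `u` in `T` (in sibling order)
and then the targets of the edges of `EL` with source `u` (in list order) are
enqueued.  When the queue is empty, the earliest (in sibling order) not yet
enqueued child of `r` in `T` is enqueued with parent `r`; if all nodes have been
enqueued the adoption records are returned. -/
noncomputable def imBFSAux (T : PreTree V) (EL : List (V × V)) :
    ℕ → BFSState V → List (Option V × V)
  | 0, s => s.adopts
  | fuel + 1, s =>
    match s.queue with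
    | u :: rest =>
        let cands := T.children (some u) ++
          (EL.filter fun e => decide (e.1 = u)).map Prod.snd
        imBFSAux T EL fuel (enq (some u) cands ⟨rest, s.marked, s.adopts⟩)
    | [] =>
        match (T.children none).find? (fun c => decide (c ∉ s.marked)) with
        | some c => imBFSAux T EL fuel (enq none [c] s)
        | none =>
            match (Finset.univ : Finset V).toList.find?
                (fun v => decide (v ∉ s.marked)) with
            | some v => imBFSAux T EL fuel (enq none [v] s)
            | none => s.adopts

/-- `imBFS T EL` : the ordered spanning tree produced by the deterministic
breadth-first search, started at `r`, of the graph whose edges are the tree edges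
of `T` together with the edges occurring in the list `EL` (Stipulation 1):
each node's new parent is the node during whose processing it was first enqueued,
and the children of each node are ordered by adoption time. -/
noncomputable def imBFS (T : PreTree V) (EL : List (V × V)) : PreTree V :=
  let ad := imBFSAux T EL (2 * Fintype.card V + 1) ⟨[], ∅, []⟩
  { parent := fun v =>
      match ad.find? (fun pc => decide (pc.2 = v)) with
      | some pc => pc.1
      | none => none
    children := fun w => (ad.filter fun pc => decide (pc.1 = w)).map Prod.snd }

/-- The set of tree edges `(P v, v)` of `T` with `P v ≠ r`. -/
def treeEdges (T : PreTree V) : Finset (V × V) :=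
  Finset.univ.filter fun e : V × V => T.parent e.2 = some e.1

/- ------------------  EB-BFS  ------------------ -/

/-- One pass of EB-BFS (also the map `RE(𝔼₁, …, 𝔼_k)`): replace the current tree
`T` by `IM-BFS(T, 𝔼)` successively for each batch `𝔼`. -/
noncomputable def EBstep (batches : List (List (V × V))) (T : PreTree V) : PreTree V :=
  batches.foldl imBFS T

/-- The pass of EB-BFS over `batches` starting from `T` is one during which every
batch replacement leaves the edge set of the tree unchanged. -/
def CleanPass (batches : List (List (V × V))) (T : PreTree V) : Prop :=
  ∀ j < batches.length,
    (imBFS ((batches.take j).foldl imBFS T) (batches.getD j [])).parent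
      = ((batches.take j).foldl imBFS T).parent

/- ------------------  the sublist S(T, 𝔼)  ------------------ -/

/-- `S T EL` : if `EL` contains no V-BFS edge w.r.t. `T`, the empty list; otherwise,
letting `e₁ = (u₁, v₁)` be the earliest V-BFS edge of `EL` whose tail has minimal
breadth-first order among tails of V-BFS edges of `EL`, the sublist of `EL` (in the
same order) of the edges `(u, v)` at the position of `e₁` or later with
`u ≠ P(v)`, `bfo u ≥ bfo u₁` and `bfo v ≥ bfo u₁`. -/
def S (T : PreTree V) (EL : List (V × V)) : List (V × V) :=
  let vb := EL.filter fun e => decide (IsVBFS T e)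
  match (vb.map fun e => bfo T e.1).min? with
  | none => []
  | some b =>
      (EL.dropWhile fun e => !(decide (IsVBFS T e) && decide (bfo T e.1 = b))).filter
        fun e => decide (T.parent e.2 ≠ some e.1) && decide (b ≤ bfo T e.1)
          && decide (b ≤ bfo T e.2)

/-- The map sending `T` to `T_{k+1}` where `T₁ = T`, `S_j = S(T_j, E_j)` and
`T_{j+1} = IM-BFS(T_j, S_j)` (i.e. `RE(S₁, …, S_k)` with the `S`-lists recomputed
from the successively current trees). -/
noncomputable def reSstep (batches : List (List (V × V))) (T : PreTree V) : PreTree V :=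
  batches.foldl (fun Tc EL => imBFS Tc (S Tc EL)) T

/-- The list `[S₁, …, S_k]` of the sublists computed along the run
`T₁ = T`, `S_j = S(T_j, E_j)`, `T_{j+1} = IM-BFS(T_j, S_j)`. -/
noncomputable def runS (batches : List (List (V × V))) (T : PreTree V) : List (List (V × V)) :=
  (List.range batches.length).map fun j =>
    S (reSstep (batches.take j) T) (batches.getD j [])

/- ------------------  depth and depth'  ------------------ -/

/-- The depth of `v` in `T`: the number of tree edges on the path from `r` to `v`. -/
noncomputable def depth (T : PreTree V) (v : V) : ℕ :=
  sInf {k : ℕ | (parentStep T)^[k] (some v) = none}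

/-- The topmost proper ancestor of `v` (the child of `r` whose subtree contains `v`). -/
noncomputable def topAnc (T : PreTree V) (v : V) : Option V :=
  (parentStep T)^[depth T v - 1] (some v)

/-- `d(T_c)` : the maximum depth in `T` of a node of the subtree of `T` rooted at
the child `c` of `r`. -/
noncomputable def subtreeMaxDepth (T : PreTree V) (c : V) : ℕ :=
  Finset.univ.sup fun u : V => if topAnc T u = some c then depth T u else 0

/-- `depth′(v, T) = Σ_{1 ≤ l ≤ j−1} d(T_l) + depth(v, T)` where `v` belongs to the
subtree `T_j` of the `j`-th child of `r` in sibling order. -/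
noncomputable def depth' (T : PreTree V) (v : V) : ℕ :=
  match topAnc T v with
  | none => depth T v
  | some c =>
      (((T.children none).takeWhile fun x => decide (x ≠ c)).map
        (subtreeMaxDepth T)).sum + depth T v

/- ------------------  node removal (statements 13, 14)  ------------------ -/

/-- The edge set of the induced subgraph `G − u`, on the subtype `{v // v ≠ u}`. -/
def Esub (E : Finset (V × V)) (u : V) :
    Finset ({v : V // v ≠ u} × {v : V // v ≠ u}) :=
  Finset.univ.filter fun e => ((e.1 : V), (e.2 : V)) ∈ E

/-- Extend an ordered spanning tree `T'` of `G − u` to one of `G` by adding `u`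
as the rightmost child of `r`. -/
def extendRight (u : V) (T' : PreTree {v : V // v ≠ u}) : PreTree V where
  parent v := if h : v = u then none else (T'.parent ⟨v, h⟩).map Subtype.val
  children w :=
    match w with
    | none => (T'.children none).map Subtype.val ++ [u]
    | some x =>
        if hx : x = u then []
        else (T'.children (some ⟨x, hx⟩)).map Subtype.val

/-- Extend an ordered spanning tree `T'` of `G − u` to one of `G` by adding `u`
as the leftmost child of `r`. -/
def extendLeft (u : V) (T' : PreTree {v : V // v ≠ u}) : PreTree V where
  parent v := if h : v = u then none else (T'.parent ⟨v, h⟩).map Subtype.val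
  children w :=
    match w with
    | none => u :: (T'.children none).map Subtype.val
    | some x =>
        if hx : x = u then []
        else (T'.children (some ⟨x, hx⟩)).map Subtype.val


section Stmt13Aux

set_option linter.unusedSectionVars false

variable {V : Type} [Fintype V] [DecidableEq V]

lemma parentStep_none_iter (T : PreTree V) (k : ℕ) : (parentStep T)^[k] none = none :=
  Function.iterate_fixed rfl k

lemma chain_bound (T : PreTree V)
    (hreach : ∀ v : V, ∃ k, (parentStep T)^[k] (some v) = none)
    {k : ℕ} {v c : V} (h : (parentStep T)^[k] (some v) = some c) :
    k < Fintype.card V := by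
  have hex := hreach v
  have hmnone : (parentStep T)^[Nat.find hex] (some v) = none := Nat.find_spec hex
  have hlt : ∀ i < Nat.find hex, (parentStep T)^[i] (some v) ≠ none :=
    fun i hi => Nat.find_min hex hi
  set m := Nat.find hex with hm
  have hkm : k < m := by
    by_contra hkm
    push_neg at hkm
    have h2 : (parentStep T)^[k] (some v) = none := by
      rw [show k = (k - m) + m by omega, Function.iterate_add_apply, hmnone,
        parentStep_none_iter]
    rw [h] at h2; exact nomatch h2
  have hinj : Function.Injective (fun i : Fin m =>
      ((parentStep T)^[(i : ℕ)] (some v)).get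
        (Option.ne_none_iff_isSome.mp (hlt i i.2))) := by
    intro i j hij
    simp only at hij
    have heq : (parentStep T)^[(i : ℕ)] (some v) = (parentStep T)^[(j : ℕ)] (some v) := by
      rw [← Option.some_get (Option.ne_none_iff_isSome.mp (hlt i i.2)),
        ← Option.some_get (Option.ne_none_iff_isSome.mp (hlt j j.2)), hij]
    rcases Nat.lt_trichotomy (i : ℕ) (j : ℕ) with hij' | hij' | hij'
    · exfalso
      apply hlt ((m - j) + i) (by omega)
      rw [Function.iterate_add_apply, heq, ← Function.iterate_add_apply,
        show (m - (j:ℕ)) + (j:ℕ) = m by omega, hmnone]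
    · exact Fin.ext hij'
    · exfalso
      apply hlt ((m - i) + j) (by omega)
      rw [Function.iterate_add_apply, ← heq, ← Function.iterate_add_apply,
        show (m - (i:ℕ)) + (i:ℕ) = m by omega, hmnone]
  have := Fintype.card_le_of_injective _ hinj
  simp only [Fintype.card_fin] at this
  omega

lemma mem_expand_iter (T : PreTree V)
    (hchild : ∀ (w : Option V) (v : V), v ∈ T.children w ↔ T.parent v = w)
    (k : ℕ) (L : List V) (v : V) :
    v ∈ (expand T)^[k] L ↔ ∃ w ∈ L, (parentStep T)^[k] (some v) = some w := by
  induction k generalizing v with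
  | zero => simp
  | succ k ih =>
    rw [Function.iterate_succ_apply']
    constructor
    · intro hv
      rw [expand, List.mem_flatMap] at hv
      obtain ⟨w, hw, hvw⟩ := hv
      rw [hchild] at hvw
      obtain ⟨z, hz, hwz⟩ := (ih w).mp hw
      refine ⟨z, hz, ?_⟩
      rw [Function.iterate_succ_apply]
      show (parentStep T)^[k] (T.parent v) = some z
      rw [hvw]; exact hwz
    · intro ⟨z, hz, hvz⟩
      rw [Function.iterate_succ_apply] at hvz
      have hvz' : (parentStep T)^[k] (T.parent v) = some z := hvz
      rcases hp : T.parent v with _ | w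
      · rw [hp, parentStep_none_iter] at hvz'; exact nomatch hvz'
      · rw [hp] at hvz'
        rw [expand, List.mem_flatMap]
        exact ⟨w, (ih w).mpr ⟨z, hz, hvz'⟩, (hchild _ _).mpr hp⟩

lemma expand_iter_nil_of_card_le (T : PreTree V)
    (hreach : ∀ v : V, ∃ k, (parentStep T)^[k] (some v) = none)
    (hchild : ∀ (w : Option V) (v : V), v ∈ T.children w ↔ T.parent v = w)
    (c : V) {k : ℕ} (hk : Fintype.card V ≤ k) :
    (expand T)^[k] [c] = [] := by
  rw [List.eq_nil_iff_forall_not_mem]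
  intro v hv
  obtain ⟨w, _, h⟩ := (mem_expand_iter T hchild k [c] v).mp hv
  exact absurd (chain_bound T hreach h) (by omega)

lemma mem_bfoList (T : PreTree V)
    (hreach : ∀ v : V, ∃ k, (parentStep T)^[k] (some v) = none)
    (hchild : ∀ (w : Option V) (v : V), v ∈ T.children w ↔ T.parent v = w)
    (x : V) : x ∈ bfoList T := by
  have hex := hreach x
  have hm : (parentStep T)^[Nat.find hex] (some x) = none := Nat.find_spec hex
  have h0 : Nat.find hex ≠ 0 := by
    intro h; rw [h] at hm; simp at hm
  obtain ⟨k, hk⟩ : ∃ k, Nat.find hex = k + 1 := ⟨Nat.find hex - 1, by omega⟩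
  have hkne : (parentStep T)^[k] (some x) ≠ none := Nat.find_min hex (by omega)
  obtain ⟨c, hc⟩ := Option.ne_none_iff_exists'.mp hkne
  have hpc : T.parent c = none := by
    rw [hk, Function.iterate_succ_apply', hc] at hm; exact hm
  rw [bfoList, List.mem_flatMap]
  refine ⟨c, (hchild none c).mpr hpc, ?_⟩
  rw [List.mem_flatMap]
  exact ⟨k, List.mem_range.mpr (by have := chain_bound T hreach hc; omega),
    (mem_expand_iter T hchild k [c] x).mpr ⟨c, List.mem_singleton_self c, hc⟩⟩

lemma indexOf_map' {α β : Type} [DecidableEq α] [DecidableEq β] {f : α → β}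
    (hf : Function.Injective f) (l : List α) (a : α) :
    (l.map f).idxOf (f a) = l.idxOf a := by
  induction l with
  | nil => rfl
  | cons x xs ih =>
    by_cases h : x = a
    · subst h; simp
    · rw [List.map_cons, List.idxOf_cons_ne _ (fun hc => h (hf hc)),
        List.idxOf_cons_ne _ h, ih]

variable {u : V}

lemma card_ne_succ (u : V) : Fintype.card {v : V // v ≠ u} + 1 = Fintype.card V := by
  have h1 : Fintype.card {v : V // v ≠ u} = Fintype.card V - Fintype.card {v : V // v = u} :=
    Fintype.card_subtype_compl _
  have h2 : Fintype.card {v : V // v = u} = 1 := Fintype.card_subtype_eq u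
  have h3 : 0 < Fintype.card V := Fintype.card_pos_iff.mpr ⟨u⟩
  omega

lemma parentStep_extend (T' : PreTree {v : V // v ≠ u}) (o : Option {v : V // v ≠ u}) :
    parentStep (extendRight u T') (o.map Subtype.val) = (parentStep T' o).map Subtype.val := by
  cases o with
  | none => rfl
  | some x => simp [parentStep, extendRight, x.2]

lemma parentStep_extend_iter (T' : PreTree {v : V // v ≠ u}) (k : ℕ)
    (o : Option {v : V // v ≠ u}) :
    (parentStep (extendRight u T'))^[k] (o.map Subtype.val)
      = ((parentStep T')^[k] o).map Subtype.val := by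
  induction k generalizing o with
  | zero => rfl
  | succ k ih =>
    rw [Function.iterate_succ_apply, Function.iterate_succ_apply, parentStep_extend, ih]

lemma expand_extend (T' : PreTree {v : V // v ≠ u}) (L : List {v : V // v ≠ u}) :
    expand (extendRight u T') (L.map Subtype.val) = (expand T' L).map Subtype.val := by
  simp only [expand, List.flatMap_map, List.map_flatMap]
  congr 1
  funext x
  simp [extendRight, x.2]

lemma expand_extend_iter (T' : PreTree {v : V // v ≠ u}) (k : ℕ) (L : List {v : V // v ≠ u}) :
    (expand (extendRight u T'))^[k] (L.map Subtype.val)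
      = ((expand T')^[k] L).map Subtype.val := by
  induction k generalizing L with
  | zero => rfl
  | succ k ih =>
    rw [Function.iterate_succ_apply, Function.iterate_succ_apply, expand_extend, ih]

lemma expand_extend_u (T' : PreTree {v : V // v ≠ u}) {k : ℕ} (hk : 1 ≤ k) :
    (expand (extendRight u T'))^[k] [u] = [] := by
  obtain ⟨j, rfl⟩ : ∃ j, k = j + 1 := ⟨k - 1, by omega⟩
  rw [Function.iterate_succ_apply]
  have h1 : expand (extendRight u T') [u] = [] := by simp [expand, extendRight]
  rw [h1]
  exact Function.iterate_fixed (by simp [expand]) j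

lemma bfoList_extend (T' : PreTree {v : V // v ≠ u})
    (hreach : ∀ v : {v : V // v ≠ u}, ∃ k, (parentStep T')^[k] (some v) = none)
    (hchild : ∀ (w : Option {v : V // v ≠ u}) (v : {v : V // v ≠ u}),
      v ∈ T'.children w ↔ T'.parent v = w) :
    bfoList (extendRight u T') = (bfoList T').map Subtype.val ++ [u] := by
  have hcard := card_ne_succ u
  have hch : (extendRight u T').children none = (T'.children none).map Subtype.val ++ [u] := rfl
  rw [bfoList, hch, List.flatMap_append]
  congr 1
  · rw [List.flatMap_map, bfoList, List.map_flatMap]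
    congr 1
    funext c
    have hsing : ([(c : V)] : List V) = ([c] : List {v : V // v ≠ u}).map Subtype.val := rfl
    calc (List.range (Fintype.card V + 1)).flatMap
          (fun k => (expand (extendRight u T'))^[k] [(c : V)])
        = (List.range (Fintype.card V + 1)).flatMap
          (fun k => ((expand T')^[k] [c]).map Subtype.val) := by
          congr 1; funext k; rw [hsing, expand_extend_iter]
      _ = ((List.range (Fintype.card V + 1)).flatMap
          (fun k => (expand T')^[k] [c])).map Subtype.val := by
          rw [List.map_flatMap]
      _ = ((List.range (Fintype.card {v : V // v ≠ u} + 1)).flatMap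
          (fun k => (expand T')^[k] [c])).map Subtype.val := by
          rw [← hcard, List.range_succ, List.flatMap_append, List.flatMap_cons,
            List.flatMap_nil, List.append_nil,
            expand_iter_nil_of_card_le T' hreach hchild c (by omega), List.append_nil]
  · rw [List.flatMap_cons, List.flatMap_nil, List.append_nil]
    have h0 : 0 < Fintype.card V := Fintype.card_pos_iff.mpr ⟨u⟩
    obtain ⟨n, hn⟩ : ∃ n, Fintype.card V + 1 = n + 1 := ⟨Fintype.card V, rfl⟩
    rw [hn, List.range_succ_eq_map, List.flatMap_cons, Function.iterate_zero_apply,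
      List.flatMap_map]
    have : ∀ k ∈ List.range n, (expand (extendRight u T'))^[k + 1] [u] = [] := by
      intro k _; exact expand_extend_u T' (by omega)
    rw [List.flatMap_eq_nil_iff.mpr (by intro k hk; exact this k hk), List.append_nil]

end Stmt13Aux

theorem stmt13 {V : Type} [Fintype V] [DecidableEq V]
    (hV : 1 ≤ Fintype.card V) (E : Finset (V × V))
    (hE : ∀ e ∈ E, e.1 ≠ e.2)
    (u : V) (hu : ∀ e ∈ E, e.2 ≠ u)
    (T' : PreTree {v : V // v ≠ u}) (hT' : IsBFSTree (Esub E u) T') :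
    IsBFSTree E (extendRight u T') := by
  obtain ⟨⟨hreach', hedge', hnodup', hchild'⟩, hnovbfs'⟩ := hT'
  have hBL : bfoList (extendRight u T') = (bfoList T').map Subtype.val ++ [u] :=
    bfoList_extend T' hreach' hchild'
  have hmemB : ∀ x : {v : V // v ≠ u}, x ∈ bfoList T' := mem_bfoList T' hreach' hchild'
  have hbfo : ∀ x : {v : V // v ≠ u}, bfo (extendRight u T') x.val = bfo T' x := by
    intro x
    unfold bfo
    rw [hBL, List.idxOf_append_of_mem (List.mem_map_of_mem (hmemB x)),
      indexOf_map' Subtype.val_injective]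
  have hunotmem : u ∉ (bfoList T').map Subtype.val := by
    intro h
    obtain ⟨x, _, hx⟩ := List.mem_map.mp h
    exact x.2 hx
  have hbfou : ∀ x : {v : V // v ≠ u},
      bfo (extendRight u T') x.val < bfo (extendRight u T') u := by
    intro x
    rw [hbfo x]
    unfold bfo
    rw [hBL, List.idxOf_append_of_notMem hunotmem]
    have h1 : @List.idxOf _ instBEqOfDecidableEq x (bfoList T') < (bfoList T').length :=
      (@List.idxOf_lt_length_iff _ instBEqOfDecidableEq _ _ _).mpr (hmemB x)
    simp only [List.length_map, List.idxOf_cons_self]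
    omega
  have hparu : (extendRight u T').parent u = none := dif_pos rfl
  have hpar : ∀ (v : V) (h : v ≠ u),
      (extendRight u T').parent v = (T'.parent ⟨v, h⟩).map Subtype.val :=
    fun v h => dif_neg h
  refine ⟨⟨?_, ?_, ?_, ?_⟩, ?_⟩
  · -- reachability
    intro v
    by_cases hv : v = u
    · subst hv
      exact ⟨1, by simp [parentStep, hparu]⟩
    · obtain ⟨k, hk⟩ := hreach' ⟨v, hv⟩
      refine ⟨k, ?_⟩
      rw [show (some v : Option V) = (some ⟨v, hv⟩ : Option {v : V // v ≠ u}).map Subtype.val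
        from rfl, parentStep_extend_iter, hk]
      rfl
  · -- tree edges in E
    intro v w hvw
    by_cases hv : v = u
    · subst hv; rw [hparu] at hvw; exact nomatch hvw
    · rw [hpar v hv] at hvw
      obtain ⟨x, hx1, hx2⟩ := Option.map_eq_some_iff.mp hvw
      have hmem := hedge' ⟨v, hv⟩ x hx1
      simp only [Esub, Finset.mem_filter, Finset.mem_univ, true_and] at hmem
      rw [← hx2]; exact hmem
  · -- nodup
    intro w
    cases w with
    | none =>
      show ((T'.children none).map Subtype.val ++ [u]).Nodup
      refine List.Nodup.append ((hnodup' none).map Subtype.val_injective)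
        (List.nodup_singleton u) ?_
      intro a ha hb
      rw [List.mem_singleton] at hb
      subst hb
      obtain ⟨x, _, hx⟩ := List.mem_map.mp ha
      exact x.2 hx
    | some x =>
      by_cases hx : x = u
      · have hcu : (extendRight u T').children (some x) = [] := by simp [extendRight, hx]
        rw [hcu]; exact List.nodup_nil
      · have hcx : (extendRight u T').children (some x)
            = (T'.children (some ⟨x, hx⟩)).map Subtype.val := by simp [extendRight, hx]
        rw [hcx]
        exact (hnodup' _).map Subtype.val_injective
  · -- children ↔ parent
    intro w v
    cases w with
    | none =>
      by_cases hv : v = u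
      · constructor
        · intro _; rw [hv]; exact hparu
        · intro _; rw [hv]; exact List.mem_append_right _ (List.mem_singleton_self u)
      · rw [show (extendRight u T').children none
            = (T'.children none).map Subtype.val ++ [u] from rfl, hpar v hv]
        simp only [List.mem_append, List.mem_singleton, hv, or_false]
        have h1 : v ∈ (T'.children none).map Subtype.val ↔ ⟨v, hv⟩ ∈ T'.children none := by
          constructor
          · intro h
            obtain ⟨x, hx1, hx2⟩ := List.mem_map.mp h
            have hxe : x = ⟨v, hv⟩ := Subtype.ext hx2
            rwa [← hxe]
          · intro h; exact List.mem_map_of_mem h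
        rw [h1, hchild' none ⟨v, hv⟩, Option.map_eq_none_iff]
    | some x =>
      by_cases hx : x = u
      · have hcu : (extendRight u T').children (some x) = [] := by simp [extendRight, hx]
        rw [hcu]
        simp only [List.not_mem_nil, false_iff]
        intro hc
        by_cases hv : v = u
        · rw [hv, hparu] at hc; exact nomatch hc
        · rw [hpar v hv] at hc
          obtain ⟨y, _, hy2⟩ := Option.map_eq_some_iff.mp hc
          exact y.2 (hy2.trans hx)
      · have hcx : (extendRight u T').children (some x)
            = (T'.children (some ⟨x, hx⟩)).map Subtype.val := by simp [extendRight, hx]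
        rw [hcx]
        by_cases hv : v = u
        · constructor
          · intro h
            obtain ⟨y, _, hy⟩ := List.mem_map.mp h
            exact absurd (hy.trans hv) y.2
          · intro h
            rw [hv, hparu] at h
            exact nomatch h
        · rw [hpar v hv]
          constructor
          · intro h
            obtain ⟨y, hy1, hy2⟩ := List.mem_map.mp h
            have hye : y = ⟨v, hv⟩ := Subtype.ext hy2
            rw [hye] at hy1
            rw [(hchild' _ _).mp hy1]
            rfl
          · intro h
            obtain ⟨y, hy1, hy2⟩ := Option.map_eq_some_iff.mp h
            have hyx : y = ⟨x, hx⟩ := Subtype.ext hy2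
            rw [hyx] at hy1
            exact List.mem_map_of_mem ((hchild' _ _).mpr hy1)
  · -- no V-BFS edge
    rintro ⟨a, b⟩ he hvb
    obtain ⟨h1, h2, h3⟩ := hvb
    simp only at h1 h2 h3
    have hb : b ≠ u := hu (a, b) he
    by_cases ha : a = u
    · subst ha
      exact absurd h1 (not_lt.mpr (le_of_lt (hbfou ⟨b, hb⟩)))
    · have hpb := hpar b hb
      rcases hp : T'.parent ⟨b, hb⟩ with _ | p
      · rw [hpb, hp] at h2; exact h2 rfl
      · refine hnovbfs' (⟨a, ha⟩, ⟨b, hb⟩)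
          (by simp only [Esub, Finset.mem_filter, Finset.mem_univ, true_and]; exact he) ?_
        refine ⟨?_, ?_, ?_⟩
        · show bfo T' ⟨a, ha⟩ < bfo T' ⟨b, hb⟩
          rw [← hbfo ⟨a, ha⟩, ← hbfo ⟨b, hb⟩]
          exact h1
        · show T'.parent ⟨b, hb⟩ ≠ none
          rw [hp]; exact Option.some_ne_none p
        · show bfo T' ⟨a, ha⟩ < bfoOpt T' (T'.parent ⟨b, hb⟩)
          rw [hp]
          show bfo T' ⟨a, ha⟩ < bfo T' p
          rw [← hbfo ⟨a, ha⟩, ← hbfo p]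
          rw [hpb, hp] at h3
          exact h3


end BFSFormal
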